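/- Fix a $\lambda$-tableau $\t_0$ and a bicomposition $(\alpha|\beta)$ of $n$, and let $\mathscr{R} = \{d \in \mathrm{Sym}_n : d^{-1} R_{\t_0} d \cap \mathrm{Sym}_{\alpha|\beta} \subseteq \mathrm{Sym}_{\alpha}\}$. For $d \in \mathrm{Sym}_n$, the following are equivalent: (a) $d \in \mathscr{R}$; (b) $\mathrm{stab}_{R_{\t_0}}(\mathrm{T}_d) \subseteq d\,\mathrm{Sym}_\alpha\,d^{-1}$; (c) whenever $\mathrm{T}_d(i,j) = \mathrm{T}_d(i,j')$ for nodes $(i,j),(i,j') \in [\lambda]$ with $j \ne j'$, the common value is one of the colours $\mathbf{c}_k$. -/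

import Mathlib

namespace SignedYoung
open Equiv Finset
open scoped Classical

abbrev Sym (n : ℕ) := Equiv.Perm (Fin n)

/-- Index of the block of the composition `γ` containing position `i` (0-based). -/
def blockOf (γ : List ℕ) (i : ℕ) : ℕ :=
  (List.range γ.length).countP (fun j => decide ((γ.take (j + 1)).sum ≤ i))

/-- The Young subgroup of `Sym n` associated to the composition `γ`. -/
def youngSubgroup (n : ℕ) (γ : List ℕ) : Subgroup (Sym n) where
  carrier := {σ | ∀ i : Fin n, blockOf γ (σ i) = blockOf γ i}
  one_mem' := by intro i; simp
  mul_mem' := by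
    intro a b ha hb i
    simp only [Equiv.Perm.mul_apply]
    rw [ha, hb]
  inv_mem' := by
    intro a ha i
    have h := ha (a⁻¹ i)
    rw [show a (a⁻¹ i) = i by simp] at h
    exact h.symm

/-- The subgroup `Sym_α` of the Young subgroup `Sym_{α|β}`: block-preserving permutations
fixing all points `≥ |α|`. -/
def symA (n : ℕ) (α β : List ℕ) : Set (Sym n) :=
  {σ | σ ∈ youngSubgroup n (α ++ β) ∧ ∀ i : Fin n, α.sum ≤ (i : ℕ) → σ i = i}

/-- The subgroup `Sym_β^{+|α|}`: block-preserving permutations fixing all points `< |α|`. -/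
def symB (n : ℕ) (α β : List ℕ) : Set (Sym n) :=
  {σ | σ ∈ youngSubgroup n (α ++ β) ∧ ∀ i : Fin n, (i : ℕ) < α.sum → σ i = i}

/-- Cells of the Young diagram of the composition `lam`. -/
abbrev Cell (lam : List ℕ) := (i : Fin lam.length) × Fin (lam.get i)

/-- A `lam`-tableau: a bijective labelling of the cells by `1, …, n` (here `Fin n`). -/
abbrev Tab (n : ℕ) (lam : List ℕ) := Cell lam ≃ Fin n

/-- The row stabilizer of a tableau. -/
def rowStab {n : ℕ} {lam : List ℕ} (t : Tab n lam) : Set (Sym n) :=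
  {σ | ∀ a : Fin n, (t.symm (σ a)).1 = (t.symm a).1}

/-- The column stabilizer of a tableau. -/
def colStab {n : ℕ} {lam : List ℕ} (t : Tab n lam) : Set (Sym n) :=
  {σ | ∀ a : Fin n, ((t.symm (σ a)).2 : ℕ) = ((t.symm a).2 : ℕ)}

/-- Colours `c_1 < c_2 < ⋯ < d_1 < d_2 < ⋯` (0-based). -/
abbrev Colour := Lex (ℕ ⊕ ℕ)

def cCol (k : ℕ) : Colour := toLex (Sum.inl k)

def dCol (k : ℕ) : Colour := toLex (Sum.inr k)

/-- `T` is a `lam`-tableau of type `(α|β)`: exactly `α_k` cells of colour `c_k` and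
`β_k` of colour `d_k`. -/
def HasType {lam : List ℕ} (α β : List ℕ) (T : Cell lam → Colour) : Prop :=
  (∀ k : ℕ, (Finset.univ.filter fun c => T c = cCol k).card = α.getD k 0) ∧
  (∀ k : ℕ, (Finset.univ.filter fun c => T c = dCol k).card = β.getD k 0)

/-- The colour of the number `i` under the canonical colouring by `(α|β)`. -/
def colourOfIdx (α β : List ℕ) (i : ℕ) : Colour :=
  if blockOf (α ++ β) i < α.length then cCol (blockOf (α ++ β) i)
  else dCol (blockOf (α ++ β) i - α.length)

/-- The canonical `lam`-tableau of type `(α|β)` associated to the tableau `t0`. -/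
def canonT {n : ℕ} {lam : List ℕ} (t0 : Tab n lam) (α β : List ℕ) : Cell lam → Colour :=
  fun c => colourOfIdx α β (t0 c)

/-- The action `σ · T = T ∘ t0⁻¹ ∘ σ⁻¹ ∘ t0` of `Sym n` on tableaux of type `(α|β)`,
through the fixed tableau `t0`. -/
def actT {n : ℕ} {lam : List ℕ} (t0 : Tab n lam) (σ : Sym n) (T : Cell lam → Colour) :
    Cell lam → Colour :=
  fun c => T (t0.symm (σ⁻¹ (t0 c)))

/-- `T_d = d · T_0`. -/
def TOf {n : ℕ} {lam : List ℕ} (t0 : Tab n lam) (α β : List ℕ) (d : Sym n) :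
    Cell lam → Colour :=
  actT t0 d (canonT t0 α β)

def RowSemistd {lam : List ℕ} (T : Cell lam → Colour) : Prop :=
  ∀ c c' : Cell lam, c.1 = c'.1 → (c.2 : ℕ) < (c'.2 : ℕ) → T c ≤ T c'

def ColSemistd {lam : List ℕ} (T : Cell lam → Colour) : Prop :=
  ∀ c c' : Cell lam, (c.2 : ℕ) = (c'.2 : ℕ) → c.1 < c'.1 → T c ≤ T c'

/-- Repeats in a row occur only for colours `c_k`. -/
def RowRepeatC {lam : List ℕ} (T : Cell lam → Colour) : Prop :=
  ∀ c c' : Cell lam, c.1 = c'.1 → (c.2 : ℕ) ≠ (c'.2 : ℕ) → T c = T c' → ∃ k, T c = cCol k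

/-- Repeats in a column occur only for colours `d_k`. -/
def ColRepeatD {lam : List ℕ} (T : Cell lam → Colour) : Prop :=
  ∀ c c' : Cell lam, (c.2 : ℕ) = (c'.2 : ℕ) → c.1 ≠ c'.1 → T c = T c' → ∃ k, T c = dCol k

def IsSemistd {lam : List ℕ} (T : Cell lam → Colour) : Prop :=
  RowSemistd T ∧ ColSemistd T ∧ RowRepeatC T ∧ ColRepeatD T

/-- A standard tableau: strictly increasing along rows and down columns. -/
def IsStd {n : ℕ} {lam : List ℕ} (t : Tab n lam) : Prop :=
  (∀ c c' : Cell lam, c.1 = c'.1 → (c.2 : ℕ) < (c'.2 : ℕ) → t c < t c') ∧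
  (∀ c c' : Cell lam, (c.2 : ℕ) = (c'.2 : ℕ) → c.1 < c'.1 → t c < t c')

def IsPartition (n : ℕ) (lam : List ℕ) : Prop :=
  lam.Pairwise (· ≥ ·) ∧ (∀ x ∈ lam, 0 < x) ∧ lam.sum = n

def IsBicomp (n : ℕ) (α β : List ℕ) : Prop :=
  (∀ x ∈ α, 0 < x) ∧ (∀ x ∈ β, 0 < x) ∧ α.sum + β.sum = n

/-- `𝒮 = {d : d⁻¹ R_{t0} d ∩ Sym_{α|β} ⊆ Sym_α}`. -/
def RSet {n : ℕ} {lam : List ℕ} (t0 : Tab n lam) (α β : List ℕ) : Set (Sym n) :=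
  {d | ∀ σ ∈ rowStab t0, d⁻¹ * σ * d ∈ youngSubgroup n (α ++ β) →
    d⁻¹ * σ * d ∈ symA n α β}

/-- `𝒞 = {d : d⁻¹ C_{t0} d ∩ Sym_{α|β} ⊆ Sym_β^{+|α|}}`. -/
def CSet {n : ℕ} {lam : List ℕ} (t0 : Tab n lam) (α β : List ℕ) : Set (Sym n) :=
  {d | ∀ σ ∈ colStab t0, d⁻¹ * σ * d ∈ youngSubgroup n (α ++ β) →
    d⁻¹ * σ * d ∈ symB n α β}

/-- The double coset `R_{t0} x Sym_{α|β}`. -/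
def dCoset {n : ℕ} {lam : List ℕ} (t0 : Tab n lam) (α β : List ℕ) (x : Sym n) :
    Set (Sym n) :=
  {ω | ∃ τ ∈ rowStab t0, ∃ ξ ∈ youngSubgroup n (α ++ β), ω = τ * x * ξ}

/-- The double coset `C_{t0} x Sym_{α|β}`. -/
def cCoset {n : ℕ} {lam : List ℕ} (t0 : Tab n lam) (α β : List ℕ) (x : Sym n) :
    Set (Sym n) :=
  {ω | ∃ σ ∈ colStab t0, ∃ ξ ∈ youngSubgroup n (α ++ β), ω = σ * x * ξ}

/-- `ε` is the sign function `ε_𝔡` on the double coset `R_{t0} 𝔡 Sym_{α|β}`: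
`ε(τ 𝔡 ξ_α ξ_β^{+|α|}) = sgn ξ_β`. -/
def IsEps {n : ℕ} {lam : List ℕ} (t0 : Tab n lam) (α β : List ℕ) (𝔡 : Sym n)
    (ε : Sym n → ℤ) : Prop :=
  ∀ τ ∈ rowStab t0, ∀ ξa ∈ symA n α β, ∀ ξb ∈ symB n α β,
    ε (τ * 𝔡 * (ξa * ξb)) = (Equiv.Perm.sign ξb : ℤ)

/-- The coefficient `𝔞_{d,𝔡} = ∑_{σ ∈ C_{t0}, σd ∈ R_{t0} 𝔡 Sym_{α|β}} sgn(σ) ε_𝔡(σ d)`. -/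
noncomputable def coeffA {n : ℕ} {lam : List ℕ} (t0 : Tab n lam) (α β : List ℕ)
    (ε : Sym n → ℤ) (d 𝔡 : Sym n) : ℤ :=
  ∑ σ : Sym n, if σ ∈ colStab t0 ∧ σ * d ∈ dCoset t0 α β 𝔡
    then (Equiv.Perm.sign σ : ℤ) * ε (σ * d) else 0

/-- The multiset of colours in column `j` of `T`. -/
def colMul {lam : List ℕ} (T : Cell lam → Colour) (j : ℕ) : Multiset Colour :=
  (Finset.univ.filter fun c : Cell lam => (c.2 : ℕ) = j).val.map T

noncomputable def sortedCol (m : Multiset Colour) : List Colour := m.sort (· ≤ ·)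

/-- Comparison of column multisets: the sorted lists agree up to position `k`, where
the first is larger. -/
def msGT (m m' : Multiset Colour) : Prop :=
  ∃ k, (∀ s, s < k → (sortedCol m).getD s (cCol 0) = (sortedCol m').getD s (cCol 0)) ∧
    (sortedCol m').getD k (cCol 0) < (sortedCol m).getD k (cCol 0)

/-- The strict column-dominance order `T ⊳ T'`. -/
def TabGT {lam : List ℕ} (T T' : Cell lam → Colour) : Prop :=
  ∃ t, (∀ j, j < t → colMul T j = colMul T' j) ∧ msGT (colMul T t) (colMul T' t)

/-- The column-dominance pre-order `T ⊵ T'`. -/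
def TabGE {lam : List ℕ} (T T' : Cell lam → Colour) : Prop :=
  (∀ j, colMul T j = colMul T' j) ∨ TabGT T T'


lemma sum_take_le (l : List ℕ) (k : ℕ) : (l.take k).sum ≤ l.sum := by
  calc (l.take k).sum ≤ (l.take k).sum + (l.drop k).sum := Nat.le_add_right _ _
    _ = l.sum := by rw [← List.sum_append, List.take_append_drop]

lemma blockOf_append_ge_iff (α β : List ℕ) (i : ℕ) :
    α.length ≤ blockOf (α ++ β) i ↔ α.sum ≤ i := by
  unfold blockOf
  rw [List.length_append, List.range_add, List.countP_append]
  by_cases h : α.sum ≤ i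
  · simp only [h, iff_true]
    have hall : ∀ j ∈ List.range α.length,
        (fun j => decide (((α ++ β).take (j + 1)).sum ≤ i)) j = true := by
      intro j hj
      rw [List.mem_range] at hj
      have ht : ((α ++ β).take (j + 1)) = α.take (j + 1) :=
        List.take_append_of_le_length (by omega)
      simp only [ht, decide_eq_true_eq]
      exact le_trans (sum_take_le _ _) h
    have h1 := List.countP_eq_length.mpr hall
    rw [List.length_range] at h1
    omega
  · simp only [h, iff_false]
    push_neg at h
    have hα : 0 < α.length := by
      rcases Nat.eq_zero_or_pos α.length with h0 | h0
      · rw [List.length_eq_zero_iff.mp h0] at h; simp at h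
      · exact h0
    have h2 : ((List.range β.length).map (α.length + ·)).countP
        (fun j => decide (((α ++ β).take (j + 1)).sum ≤ i)) = 0 := by
      rw [List.countP_eq_zero]
      intro a ha
      rw [List.mem_map] at ha
      obtain ⟨j, _, rfl⟩ := ha
      have ht : ((α ++ β).take (α.length + j + 1)) = α ++ β.take (j + 1) := by
        have : α.length + j + 1 = α.length + (j + 1) := by omega
        rw [this, List.take_length_add_append]
      simp only [ht, decide_eq_true_eq, List.sum_append]
      omega
    have h3 : (List.range α.length).countP
        (fun j => decide (((α ++ β).take (j + 1)).sum ≤ i)) < α.length := by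
      have hle := List.countP_le_length
        (l := List.range α.length) (p := fun j => decide (((α ++ β).take (j + 1)).sum ≤ i))
      rw [List.length_range] at hle
      rcases lt_or_eq_of_le hle with h' | h'
      · exact h'
      exfalso
      have := List.countP_eq_length.mp (by rw [h', List.length_range])
      have hmem : α.length - 1 ∈ List.range α.length := List.mem_range.mpr (by omega)
      have := this _ hmem
      have ht : ((α ++ β).take (α.length - 1 + 1)) = α := by
        have h1 : α.length - 1 + 1 = α.length := by omega
        rw [h1, List.take_append_of_le_length (le_refl _), List.take_length]
      rw [ht] at this
      simp only [decide_eq_true_eq] at this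
      omega
    omega

lemma blockOf_append_lt_iff (α β : List ℕ) (i : ℕ) :
    blockOf (α ++ β) i < α.length ↔ i < α.sum := by
  have := blockOf_append_ge_iff α β i; omega

lemma colourOfIdx_eq_iff (α β : List ℕ) (i j : ℕ) :
    colourOfIdx α β i = colourOfIdx α β j ↔ blockOf (α ++ β) i = blockOf (α ++ β) j := by
  constructor
  · intro h
    unfold colourOfIdx at h
    split_ifs at h with h1 h2 h2
    · simp only [cCol, toLex_inj, Sum.inl.injEq] at h; omega
    · exact absurd h (by simp [cCol, dCol])
    · exact absurd h (by simp [cCol, dCol])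
    · simp only [dCol, toLex_inj, Sum.inr.injEq] at h; omega
  · intro h; unfold colourOfIdx; rw [h]

lemma colourOfIdx_cCol_iff (α β : List ℕ) (i : ℕ) :
    (∃ k, colourOfIdx α β i = cCol k) ↔ i < α.sum := by
  rw [← blockOf_append_lt_iff α β i]
  unfold colourOfIdx
  split_ifs with h1
  · simp [h1]
  · simp only [h1, iff_false]
    rintro ⟨k, hk⟩
    simp [cCol, dCol, toLex_inj] at hk

lemma TOf_apply {n : ℕ} {lam : List ℕ} (t0 : Tab n lam) (α β : List ℕ) (d : Sym n)
    (c : Cell lam) : TOf t0 α β d c = colourOfIdx α β (d⁻¹ (t0 c)) := by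
  simp [TOf, actT, canonT]

lemma actT_TOf_apply {n : ℕ} {lam : List ℕ} (t0 : Tab n lam) (α β : List ℕ) (σ d : Sym n)
    (c : Cell lam) :
    actT t0 σ (TOf t0 α β d) c = colourOfIdx α β (d⁻¹ (σ⁻¹ (t0 c))) := by
  simp [TOf, actT, canonT]

lemma actT_fix_iff {n : ℕ} {lam : List ℕ} (t0 : Tab n lam) (α β : List ℕ) (σ d : Sym n) :
    actT t0 σ (TOf t0 α β d) = TOf t0 α β d ↔
      d⁻¹ * σ * d ∈ youngSubgroup n (α ++ β) := by
  constructor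
  · intro h i
    have h2 := congrFun h (t0.symm (σ (d i)))
    rw [actT_TOf_apply, TOf_apply] at h2
    simp only [Equiv.apply_symm_apply] at h2
    rw [show σ⁻¹ (σ (d i)) = d i by simp] at h2
    have := (colourOfIdx_eq_iff α β _ _).mp h2
    simpa [Equiv.Perm.mul_apply] using this.symm
  · intro h
    funext c
    rw [actT_TOf_apply, TOf_apply]
    apply (colourOfIdx_eq_iff α β _ _).mpr
    have h' := (youngSubgroup n (α ++ β)).inv_mem h
    have := h' (d⁻¹ (t0 c))
    simpa [mul_inv_rev, Equiv.Perm.mul_apply] using this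

lemma swap_mem_rowStab {n : ℕ} {lam : List ℕ} (t0 : Tab n lam) {c c' : Cell lam}
    (h : c.1 = c'.1) : Equiv.swap (t0 c) (t0 c') ∈ rowStab t0 := by
  intro a
  rcases eq_or_ne a (t0 c) with rfl | h1
  · simp [Equiv.swap_apply_left, h]
  rcases eq_or_ne a (t0 c') with rfl | h2
  · simp [Equiv.swap_apply_right, h]
  · rw [Equiv.swap_apply_of_ne_of_ne h1 h2]

/-- **Characterisation of `𝒮` (Lemma on `ℛ`).** For `d ∈ Sym n` the following are
equivalent: (a) `d ∈ ℛ`; (b) `stab_{R_{t0}}(T_d) ⊆ d Sym_α d⁻¹`; (c) any repeated colour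
in a row of `T_d` is one of the colours `c_k`. -/
theorem mem_RSet_iff (n : ℕ) (lam : List ℕ) (hl : IsPartition n lam)
    (α β : List ℕ) (hab : IsBicomp n α β) (t0 : Tab n lam) (d : Sym n) :
    (d ∈ RSet t0 α β ↔
      {σ | σ ∈ rowStab t0 ∧ actT t0 σ (TOf t0 α β d) = TOf t0 α β d} ⊆
        {x | ∃ ξ ∈ symA n α β, x = d * ξ * d⁻¹}) ∧
    (d ∈ RSet t0 α β ↔
      ∀ c c' : Cell lam, c.1 = c'.1 → (c.2 : ℕ) ≠ (c'.2 : ℕ) →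
        TOf t0 α β d c = TOf t0 α β d c' → ∃ k, TOf t0 α β d c = cCol k) := by
  constructor
  · constructor
    · intro ha σ hσ
      obtain ⟨hrow, hfix⟩ := hσ
      have hy : d⁻¹ * σ * d ∈ youngSubgroup n (α ++ β) := (actT_fix_iff t0 α β σ d).mp hfix
      refine ⟨d⁻¹ * σ * d, ha σ hrow hy, ?_⟩
      group
    · intro hb σ hσ hy
      obtain ⟨ξ, hξ, heq⟩ := hb ⟨hσ, (actT_fix_iff t0 α β σ d).mpr hy⟩
      have h2 : d⁻¹ * σ * d = ξ := by rw [heq]; group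
      rw [h2]; exact hξ
  · constructor
    · intro ha c c' hrow hcol hTeq
      have hcc : c ≠ c' := by
        rintro rfl; exact hcol rfl
      have hne : t0 c ≠ t0 c' := fun h => hcc (t0.injective h)
      set σ : Sym n := Equiv.swap (t0 c) (t0 c') with hσdef
      have hrowσ : σ ∈ rowStab t0 := swap_mem_rowStab t0 hrow
      have hblk : blockOf (α ++ β) ((d⁻¹ (t0 c) : Fin n) : ℕ) =
          blockOf (α ++ β) ((d⁻¹ (t0 c') : Fin n) : ℕ) := by
        have h1 := hTeq
        rw [TOf_apply, TOf_apply] at h1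
        exact (colourOfIdx_eq_iff α β _ _).mp h1
      have happ : ∀ x : Fin n, (d⁻¹ * σ * d) x = d⁻¹ (σ (d x)) := by
        intro x; rfl
      have hy : d⁻¹ * σ * d ∈ youngSubgroup n (α ++ β) := by
        intro x
        rw [happ]
        rcases eq_or_ne (d x) (t0 c) with h1 | h1
        · rw [hσdef]
          rw [h1, Equiv.swap_apply_left]
          have : x = d⁻¹ (t0 c) := by rw [← h1]; simp
          rw [this]
          exact hblk.symm
        rcases eq_or_ne (d x) (t0 c') with h2 | h2
        · rw [hσdef, h2, Equiv.swap_apply_right]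
          have : x = d⁻¹ (t0 c') := by rw [← h2]; simp
          rw [this]
          exact hblk
        · rw [hσdef, Equiv.swap_apply_of_ne_of_ne h1 h2]
          simp
      have hA := ha σ hrowσ hy
      have hlt : ((d⁻¹ (t0 c) : Fin n) : ℕ) < α.sum := by
        by_contra hge
        push_neg at hge
        have := hA.2 (d⁻¹ (t0 c)) hge
        rw [happ] at this
        rw [show d (d⁻¹ (t0 c)) = t0 c by simp] at this
        rw [hσdef, Equiv.swap_apply_left] at this
        exact hne ((d⁻¹ : Sym n).injective this).symm
      rw [TOf_apply]
      exact (colourOfIdx_cCol_iff α β _).mpr hlt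
    · intro hc σ hσrow hy
      refine ⟨hy, ?_⟩
      intro i hi
      by_contra hfix
      have happ : (d⁻¹ * σ * d) i = d⁻¹ (σ (d i)) := rfl
      set a : Fin n := d i with hadef
      set b : Fin n := σ (d i) with hbdef
      have hab : a ≠ b := by
        intro h
        apply hfix
        rw [happ, ← h, hadef]
        simp
      set c : Cell lam := t0.symm a with hcdef
      set c' : Cell lam := t0.symm b with hc'def
      have hrow : c.1 = c'.1 := by
        have := hσrow a
        rw [← hbdef] at this
        exact this.symm
      have hcc : c ≠ c' := by
        intro h
        apply hab
        have := congrArg t0 h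
        simpa [hcdef, hc'def] using this
      have hcol : (c.2 : ℕ) ≠ (c'.2 : ℕ) := by
        intro h
        apply hcc
        obtain ⟨c1, c2⟩ := c
        obtain ⟨c1', c2'⟩ := c'
        dsimp at hrow h
        subst hrow
        simp only [Sigma.mk.inj_iff, heq_eq_eq, true_and]
        exact Fin.ext h
      have hTc : TOf t0 α β d c = colourOfIdx α β i := by
        rw [TOf_apply, hcdef]
        simp [hadef]
      have hTc' : TOf t0 α β d c' = colourOfIdx α β ((d⁻¹ * σ * d) i : ℕ) := by
        rw [TOf_apply, hc'def]
        simp only [Equiv.apply_symm_apply]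
        rw [hbdef, happ]
      have hTeq : TOf t0 α β d c = TOf t0 α β d c' := by
        rw [hTc, hTc']
        exact (colourOfIdx_eq_iff α β _ _).mpr (hy i).symm
      obtain ⟨k, hk⟩ := hc c c' hrow hcol hTeq
      rw [hTc] at hk
      have := (colourOfIdx_cCol_iff α β i).mp ⟨k, hk⟩
      omega

end SignedYoung
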